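/- arXiv:0805.3135 — 3 statements merged into one kernel-verified Lean document; each statement's English description precedes it below -/
import Mathlib

section
/- For |p|,|q|<1 and z ∈ ℂ*, the elliptic gamma function satisfies the argument duplication formula Γ(z²;p,q) = Γ(z;p,q) Γ(-z;p,q) Γ(q^{1/2}z;p,q) Γ(-q^{1/2}z;p,q) Γ(p^{1/2}z;p,q) Γ(-p^{1/2}z;p,q) Γ((pq)^{1/2}z;p,q) Γ(-(pq)^{1/2}z;p,q), where q^{1/2}, p^{1/2}, (pq)^{1/2} are fixed square roots with (pq)^{1/2} = p^{1/2} q^{1/2}. -/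
noncomputable def qPochhammerInf (z q : ℂ) : ℂ := ∏' j : ℕ, (1 - z * q ^ j)

noncomputable def theta (z p : ℂ) : ℂ :=
  ∏' j : ℕ, (1 - z * p ^ j) * (1 - p ^ (j + 1) * z⁻¹)

noncomputable def ellGamma (z p q : ℂ) : ℂ :=
  ∏' jk : ℕ × ℕ,
    (1 - z⁻¹ * p ^ (jk.1 + 1) * q ^ (jk.2 + 1)) / (1 - z * p ^ jk.1 * q ^ jk.2)

namespace EG

open Filter Complex Topology

lemma hasProd_zero {ι : Type*} (f : ι → ℂ) (i₀ : ι) (h : f i₀ = 0) : HasProd f 0 := by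
  have hev : ∀ᶠ s : Finset ι in atTop, ∏ i ∈ s, f i = 0 :=
    eventually_atTop.2 ⟨{i₀}, fun s hs =>
      Finset.prod_eq_zero (hs (Finset.mem_singleton_self i₀)) h⟩
  exact Tendsto.congr' (hev.mono fun s hx => hx.symm) tendsto_const_nhds

lemma small_cofinite {ι : Type*} (f : ι → ℂ) (hf : Summable fun i => ‖f i‖) :
    ∀ᶠ i in cofinite, ‖f i‖ ≤ 1 / 2 := by
  have h0 : Tendsto (fun i => ‖f i‖) cofinite (𝓝 0) := hf.tendsto_cofinite_zero
  exact (h0.eventually (gt_mem_nhds (by norm_num : (0 : ℝ) < 1 / 2))).mono fun i hi => hi.le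

lemma multipliable_one_add {ι : Type*} (f : ι → ℂ) (hf : Summable fun i => ‖f i‖) :
    Multipliable fun i => 1 + f i := by
  by_cases hzero : ∃ i, 1 + f i = 0
  · obtain ⟨i₀, hi₀⟩ := hzero
    exact ⟨0, hasProd_zero _ i₀ hi₀⟩
  · push_neg at hzero
    have hlog : Summable fun i => Complex.log (1 + f i) := by
      apply Summable.of_norm_bounded_eventually (g := fun i => 3 / 2 * ‖f i‖) (hf.mul_left _)
      exact (small_cofinite f hf).mono fun i hi => Complex.norm_log_one_add_half_le_self hi
    exact Complex.multipliable_of_summable_log hlog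

lemma multipliable_one_add_inv {ι : Type*} (f : ι → ℂ) (hf : Summable fun i => ‖f i‖) :
    Multipliable fun i => (1 + f i)⁻¹ := by
  have h2 : Summable fun i => ‖(1 + f i)⁻¹ - 1‖ := by
    apply Summable.of_norm_bounded_eventually (g := fun i => 2 * ‖f i‖) (hf.mul_left _)
    filter_upwards [small_cofinite f hf] with i hi
    rw [norm_norm]
    have h1 : (1 : ℝ) / 2 ≤ ‖1 + f i‖ := by
      have h := norm_add_le (1 + f i) (-f i)
      simp only [add_neg_cancel_right, norm_neg, norm_one] at h
      linarith
    have hne : 1 + f i ≠ 0 := by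
      intro h; rw [h, norm_zero] at h1; linarith
    have hrw : (1 + f i)⁻¹ - 1 = -f i * (1 + f i)⁻¹ := by
      field_simp
      ring
    rw [hrw, norm_mul, norm_neg]
    have hinv : ‖(1 + f i)⁻¹‖ ≤ 2 := by
      rw [norm_inv]
      have hpos : (0 : ℝ) < ‖1 + f i‖ := by linarith
      rw [inv_le_comm₀ hpos (by norm_num : (0 : ℝ) < 2)]
      linarith
    calc ‖f i‖ * ‖(1 + f i)⁻¹‖ ≤ ‖f i‖ * 2 :=
          mul_le_mul_of_nonneg_left hinv (norm_nonneg _)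
      _ = 2 * ‖f i‖ := by ring
  exact (multipliable_one_add _ h2).congr fun i => by ring

lemma summable_geom2 (c u v : ℂ) (hu : ‖u‖ < 1) (hv : ‖v‖ < 1) :
    Summable fun mn : ℕ × ℕ => ‖c * u ^ mn.1 * v ^ mn.2‖ := by
  have hf : Summable fun m : ℕ => ‖c‖ * ‖u‖ ^ m :=
    (summable_geometric_of_lt_one (norm_nonneg u) hu).mul_left _
  have hg : Summable fun n : ℕ => ‖v‖ ^ n := summable_geometric_of_lt_one (norm_nonneg v) hv
  have h := hf.mul_of_nonneg hg
    (fun m => mul_nonneg (norm_nonneg c) (pow_nonneg (norm_nonneg u) m))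
    (fun n => pow_nonneg (norm_nonneg v) n)
  exact h.congr fun mn => by simp [norm_mul, norm_pow, mul_assoc]

lemma mul1 (c u v : ℂ) (hu : ‖u‖ < 1) (hv : ‖v‖ < 1) :
    Multipliable fun mn : ℕ × ℕ => 1 - c * u ^ mn.1 * v ^ mn.2 := by
  have h := multipliable_one_add (fun mn : ℕ × ℕ => -(c * u ^ mn.1 * v ^ mn.2))
    (by simpa using summable_geom2 c u v hu hv)
  exact h.congr fun mn => by ring

lemma mul2 (c u v : ℂ) (hu : ‖u‖ < 1) (hv : ‖v‖ < 1) :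
    Multipliable fun mn : ℕ × ℕ => (1 - c * u ^ mn.1 * v ^ mn.2)⁻¹ := by
  have h := multipliable_one_add_inv (fun mn : ℕ × ℕ => -(c * u ^ mn.1 * v ^ mn.2))
    (by simpa using summable_geom2 c u v hu hv)
  exact h.congr fun mn => by rw [← sub_eq_add_neg]

noncomputable def PP (c u v : ℂ) : ℂ := ∏' mn : ℕ × ℕ, (1 - c * u ^ mn.1 * v ^ mn.2)

noncomputable def PPinv (c u v : ℂ) : ℂ := ∏' mn : ℕ × ℕ, (1 - c * u ^ mn.1 * v ^ mn.2)⁻¹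

lemma ellGamma_eq (w u v : ℂ) (hu : ‖u‖ < 1) (hv : ‖v‖ < 1) :
    ellGamma w u v = PP (w⁻¹ * u * v) u v * PPinv w u v := by
  rw [ellGamma, PP, PPinv, ← Multipliable.tprod_mul (mul1 _ _ _ hu hv) (mul2 _ _ _ hu hv)]
  exact tprod_congr fun jk => by
    rw [div_eq_mul_inv]
    congr 1
    ring

lemma PP_sq (c u v : ℂ) (hu : ‖u‖ < 1) (hv : ‖v‖ < 1) :
    PP (c ^ 2) (u ^ 2) (v ^ 2) = PP c u v * PP (-c) u v := by
  rw [PP, PP, PP, ← Multipliable.tprod_mul (mul1 c u v hu hv) (mul1 (-c) u v hu hv)]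
  exact tprod_congr fun mn => by
    have h1 : (u ^ 2) ^ mn.1 = (u ^ mn.1) ^ 2 := by
      rw [← pow_mul, ← pow_mul, mul_comm]
    have h2 : (v ^ 2) ^ mn.2 = (v ^ mn.2) ^ 2 := by
      rw [← pow_mul, ← pow_mul, mul_comm]
    rw [h1, h2]; ring

lemma PPinv_sq (c u v : ℂ) (hu : ‖u‖ < 1) (hv : ‖v‖ < 1) :
    PPinv (c ^ 2) (u ^ 2) (v ^ 2) = PPinv c u v * PPinv (-c) u v := by
  rw [PPinv, PPinv, PPinv, ← Multipliable.tprod_mul (mul2 c u v hu hv) (mul2 (-c) u v hu hv)]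
  exact tprod_congr fun mn => by
    have h1 : (u ^ 2) ^ mn.1 = (u ^ mn.1) ^ 2 := by
      rw [← pow_mul, ← pow_mul, mul_comm]
    have h2 : (v ^ 2) ^ mn.2 = (v ^ mn.2) ^ 2 := by
      rw [← pow_mul, ← pow_mul, mul_comm]
    rw [← mul_inv]
    congr 1
    rw [h1, h2]; ring

def e4p : (Fin 2 × Fin 2) × (ℕ × ℕ) ≃ ℕ × ℕ where
  toFun x := (2 * x.2.1 + x.1.1, 2 * x.2.2 + x.1.2)
  invFun y := ((⟨y.1 % 2, Nat.mod_lt _ (by norm_num)⟩, ⟨y.2 % 2, Nat.mod_lt _ (by norm_num)⟩),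
    (y.1 / 2, y.2 / 2))
  left_inv := by
    rintro ⟨⟨⟨a, ha⟩, ⟨b, hb⟩⟩, ⟨m, n⟩⟩
    simp only [Prod.mk.injEq, Fin.mk.injEq]
    omega
  right_inv := by
    rintro ⟨m, n⟩
    simp only [Prod.mk.injEq]
    omega

def e4 : (Σ _ : Fin 2 × Fin 2, ℕ × ℕ) ≃ ℕ × ℕ := (Equiv.sigmaEquivProd _ _).trans e4p

lemma tprod_split (f : ℕ × ℕ → ℂ) (hf : Multipliable f)
    (h : ∀ a b : ℕ, Multipliable fun mn : ℕ × ℕ => f (2 * mn.1 + a, 2 * mn.2 + b)) :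
    ∏' mn : ℕ × ℕ, f mn =
      ((∏' mn : ℕ × ℕ, f (2 * mn.1, 2 * mn.2)) *
        (∏' mn : ℕ × ℕ, f (2 * mn.1 + 1, 2 * mn.2))) *
      ((∏' mn : ℕ × ℕ, f (2 * mn.1, 2 * mn.2 + 1)) *
        (∏' mn : ℕ × ℕ, f (2 * mn.1 + 1, 2 * mn.2 + 1))) := by
  have hfe : Multipliable fun x => f (e4 x) := e4.multipliable_iff.mpr hf
  have hstep : ∏' x : (Σ _ : Fin 2 × Fin 2, ℕ × ℕ), f (e4 x) =
      ∏' b : Fin 2 × Fin 2, ∏' c : ℕ × ℕ, f (2 * c.1 + (b.1 : ℕ), 2 * c.2 + (b.2 : ℕ)) :=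
    Multipliable.tprod_sigma' (fun b => h b.1 b.2) hfe
  rw [← e4.tprod_eq f, hstep, tprod_fintype, Fintype.prod_prod_type]
  rw [Fin.prod_univ_two]
  rw [Fin.prod_univ_two, Fin.prod_univ_two]
  simp only [Fin.val_zero, Fin.val_one, add_zero]
  ring

lemma PP_merge (c u v : ℂ) (hu : ‖u‖ < 1) (hv : ‖v‖ < 1) :
    PP c u v =
      (PP c (u ^ 2) (v ^ 2) * PP (c * u) (u ^ 2) (v ^ 2)) *
      (PP (c * v) (u ^ 2) (v ^ 2) * PP (c * u * v) (u ^ 2) (v ^ 2)) := by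
  have hu2 : ‖u ^ 2‖ < 1 := by
    rw [norm_pow]; nlinarith [norm_nonneg u]
  have hv2 : ‖v ^ 2‖ < 1 := by
    rw [norm_pow]; nlinarith [norm_nonneg v]
  have hfib : ∀ a b : ℕ, Multipliable fun mn : ℕ × ℕ =>
      (fun mn : ℕ × ℕ => 1 - c * u ^ mn.1 * v ^ mn.2) (2 * mn.1 + a, 2 * mn.2 + b) :=
    fun a b => (mul1 (c * u ^ a * v ^ b) (u ^ 2) (v ^ 2) hu2 hv2).congr fun mn => by
      simp only [pow_add, pow_mul]; ring
  rw [PP, tprod_split _ (mul1 c u v hu hv) hfib]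
  have t00 : (∏' mn : ℕ × ℕ, (1 - c * u ^ (2 * mn.1) * v ^ (2 * mn.2))) =
      PP c (u ^ 2) (v ^ 2) :=
    tprod_congr fun mn => by simp only [pow_mul]
  have t10 : (∏' mn : ℕ × ℕ, (1 - c * u ^ (2 * mn.1 + 1) * v ^ (2 * mn.2))) =
      PP (c * u) (u ^ 2) (v ^ 2) :=
    tprod_congr fun mn => by simp only [pow_add, pow_mul, pow_one]; ring
  have t01 : (∏' mn : ℕ × ℕ, (1 - c * u ^ (2 * mn.1) * v ^ (2 * mn.2 + 1))) =
      PP (c * v) (u ^ 2) (v ^ 2) :=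
    tprod_congr fun mn => by simp only [pow_add, pow_mul, pow_one]; ring
  have t11 : (∏' mn : ℕ × ℕ, (1 - c * u ^ (2 * mn.1 + 1) * v ^ (2 * mn.2 + 1))) =
      PP (c * u * v) (u ^ 2) (v ^ 2) :=
    tprod_congr fun mn => by simp only [pow_add, pow_mul, pow_one]; ring
  rw [t00, t10, t01, t11]

lemma PPinv_merge (c u v : ℂ) (hu : ‖u‖ < 1) (hv : ‖v‖ < 1) :
    PPinv c u v =
      (PPinv c (u ^ 2) (v ^ 2) * PPinv (c * u) (u ^ 2) (v ^ 2)) *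
      (PPinv (c * v) (u ^ 2) (v ^ 2) * PPinv (c * u * v) (u ^ 2) (v ^ 2)) := by
  have hu2 : ‖u ^ 2‖ < 1 := by
    rw [norm_pow]; nlinarith [norm_nonneg u]
  have hv2 : ‖v ^ 2‖ < 1 := by
    rw [norm_pow]; nlinarith [norm_nonneg v]
  have hfib : ∀ a b : ℕ, Multipliable fun mn : ℕ × ℕ =>
      (fun mn : ℕ × ℕ => (1 - c * u ^ mn.1 * v ^ mn.2)⁻¹) (2 * mn.1 + a, 2 * mn.2 + b) :=
    fun a b => (mul2 (c * u ^ a * v ^ b) (u ^ 2) (v ^ 2) hu2 hv2).congr fun mn => by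
      congr 1
      simp only [pow_add, pow_mul]; ring
  rw [PPinv, tprod_split _ (mul2 c u v hu hv) hfib]
  have t00 : (∏' mn : ℕ × ℕ, (1 - c * u ^ (2 * mn.1) * v ^ (2 * mn.2))⁻¹) =
      PPinv c (u ^ 2) (v ^ 2) :=
    tprod_congr fun mn => by simp only [pow_mul]
  have t10 : (∏' mn : ℕ × ℕ, (1 - c * u ^ (2 * mn.1 + 1) * v ^ (2 * mn.2))⁻¹) =
      PPinv (c * u) (u ^ 2) (v ^ 2) :=
    tprod_congr fun mn => by congr 1; simp only [pow_add, pow_mul, pow_one]; ring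
  have t01 : (∏' mn : ℕ × ℕ, (1 - c * u ^ (2 * mn.1) * v ^ (2 * mn.2 + 1))⁻¹) =
      PPinv (c * v) (u ^ 2) (v ^ 2) :=
    tprod_congr fun mn => by congr 1; simp only [pow_add, pow_mul, pow_one]; ring
  have t11 : (∏' mn : ℕ × ℕ, (1 - c * u ^ (2 * mn.1 + 1) * v ^ (2 * mn.2 + 1))⁻¹) =
      PPinv (c * u * v) (u ^ 2) (v ^ 2) :=
    tprod_congr fun mn => by congr 1; simp only [pow_add, pow_mul, pow_one]; ring
  rw [t00, t10, t01, t11]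

end EG

theorem ellGamma_duplication (p q z sp sq : ℂ) (hp : ‖p‖ < 1) (hq : ‖q‖ < 1)
    (hz : z ≠ 0) (hsp : sp ^ 2 = p) (hsq : sq ^ 2 = q) :
    ellGamma (z ^ 2) p q =
      ellGamma z p q * ellGamma (-z) p q *
      ellGamma (sq * z) p q * ellGamma (-(sq * z)) p q *
      ellGamma (sp * z) p q * ellGamma (-(sp * z)) p q *
      ellGamma (sp * sq * z) p q * ellGamma (-(sp * sq * z)) p q := by
  subst hsp
  subst hsq
  have hsp1 : ‖sp‖ < 1 := by
    rw [norm_pow] at hp; nlinarith [norm_nonneg sp]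
  have hsq1 : ‖sq‖ < 1 := by
    rw [norm_pow] at hq; nlinarith [norm_nonneg sq]
  have hzinv : ∀ w : ℂ, w⁻¹ * w ^ 2 = w := by
    intro w
    rcases eq_or_ne w 0 with h | h
    · simp [h]
    · rw [pow_two, ← mul_assoc, inv_mul_cancel₀ h, one_mul]
  rw [EG.ellGamma_eq (z ^ 2) _ _ hp hq, EG.ellGamma_eq z _ _ hp hq, EG.ellGamma_eq (-z) _ _ hp hq,
    EG.ellGamma_eq (sq * z) _ _ hp hq, EG.ellGamma_eq (-(sq * z)) _ _ hp hq,
    EG.ellGamma_eq (sp * z) _ _ hp hq, EG.ellGamma_eq (-(sp * z)) _ _ hp hq,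
    EG.ellGamma_eq (sp * sq * z) _ _ hp hq, EG.ellGamma_eq (-(sp * sq * z)) _ _ hp hq]
  have e0 : (z ^ 2)⁻¹ * sp ^ 2 * sq ^ 2 = (z⁻¹ * sp * sq) ^ 2 := by
    rw [← inv_pow]; ring
  have eA : z⁻¹ * sp ^ 2 * sq ^ 2 = z⁻¹ * sp * sq * sp * sq := by ring
  have eB : (-z)⁻¹ * sp ^ 2 * sq ^ 2 = -(z⁻¹ * sp * sq) * sp * sq := by
    rw [inv_neg]; ring
  have eC : (sq * z)⁻¹ * sp ^ 2 * sq ^ 2 = z⁻¹ * sp * sq * sp := by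
    rw [mul_inv, show sq⁻¹ * z⁻¹ * sp ^ 2 * sq ^ 2 = (sq⁻¹ * sq ^ 2) * (z⁻¹ * sp ^ 2) from by ring,
      hzinv sq]
    ring
  have eD : (-(sq * z))⁻¹ * sp ^ 2 * sq ^ 2 = -(z⁻¹ * sp * sq) * sp := by
    rw [inv_neg, neg_mul, neg_mul, eC]; ring
  have eE : (sp * z)⁻¹ * sp ^ 2 * sq ^ 2 = z⁻¹ * sp * sq * sq := by
    rw [mul_inv, show sp⁻¹ * z⁻¹ * sp ^ 2 * sq ^ 2 = (sp⁻¹ * sp ^ 2) * (z⁻¹ * sq ^ 2) from by ring,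
      hzinv sp]
    ring
  have eF : (-(sp * z))⁻¹ * sp ^ 2 * sq ^ 2 = -(z⁻¹ * sp * sq) * sq := by
    rw [inv_neg, neg_mul, neg_mul, eE]; ring
  have eG : (sp * sq * z)⁻¹ * sp ^ 2 * sq ^ 2 = z⁻¹ * sp * sq := by
    rw [mul_inv, mul_inv,
      show sp⁻¹ * sq⁻¹ * z⁻¹ * sp ^ 2 * sq ^ 2 = (sp⁻¹ * sp ^ 2) * ((sq⁻¹ * sq ^ 2) * z⁻¹) from by
        ring,
      hzinv sp, hzinv sq]
    ring
  have eH : (-(sp * sq * z))⁻¹ * sp ^ 2 * sq ^ 2 = -(z⁻¹ * sp * sq) := by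
    rw [inv_neg, neg_mul, neg_mul, eG]
  rw [e0, eA, eB, eC, eD, eE, eF, eG, eH]
  rw [show sq * z = z * sq from mul_comm sq z, show -(z * sq) = -z * sq from by ring,
    show sp * z = z * sp from mul_comm sp z, show -(z * sp) = -z * sp from by ring,
    show sp * sq * z = z * sp * sq from by ring, show -(z * sp * sq) = -z * sp * sq from by ring]
  rw [EG.PP_sq _ _ _ hsp1 hsq1, EG.PPinv_sq z sp sq hsp1 hsq1]
  rw [EG.PP_merge (z⁻¹ * sp * sq) sp sq hsp1 hsq1, EG.PP_merge (-(z⁻¹ * sp * sq)) sp sq hsp1 hsq1,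
    EG.PPinv_merge z sp sq hsp1 hsq1, EG.PPinv_merge (-z) sp sq hsp1 hsq1]
  ring
end

section
/- For |q|<1 and u ∈ ℂ, the Jacobi triple product identity holds in the form θ₁(u|τ) = i q^{1/8} e^{-πiu} (q;q)_∞ θ(e^{2πiu};q), where q = e^{2πiτ} with Im τ > 0; equivalently, ∑_{k∈ℤ} (−1)^k q^{k(k−1)/2} z^k = (q;q)_∞ (z;q)_∞ (q z^{-1};q)_∞ for z ≠ 0. -/
open Finset Filter Topology

noncomputable def JP (q : ℂ) (n : ℕ) : ℂ := ∏ i ∈ Finset.range n, (1 - q ^ (i + 1))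

noncomputable def Jgb (q : ℂ) (n k : ℕ) : ℂ :=
  if k ≤ n then JP q n / (JP q k * JP q (n - k)) else 0

lemma one_sub_pow_ne {q : ℂ} (hq : ‖q‖ < 1) (i : ℕ) : (1 : ℂ) - q ^ (i + 1) ≠ 0 := by
  intro h
  have h1 : q ^ (i + 1) = 1 := by linear_combination -h
  have : ‖q ^ (i + 1)‖ < 1 := by
    rw [norm_pow]
    exact pow_lt_one₀ (norm_nonneg q) hq (Nat.succ_ne_zero i)
  rw [h1] at this; simp at this

lemma JP_ne_zero {q : ℂ} (hq : ‖q‖ < 1) (n : ℕ) : JP q n ≠ 0 :=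
  Finset.prod_ne_zero_iff.2 fun i _ => one_sub_pow_ne hq i

lemma JP_succ (q : ℂ) (n : ℕ) : JP q (n + 1) = JP q n * (1 - q ^ (n + 1)) := by
  simp [JP, Finset.prod_range_succ]

lemma JP_zero (q : ℂ) : JP q 0 = 1 := by simp [JP]

lemma Jgb_zero {q : ℂ} (hq : ‖q‖ < 1) (n : ℕ) : Jgb q n 0 = 1 := by
  simp only [Jgb, if_pos (Nat.zero_le n), JP_zero, Nat.sub_zero, one_mul]
  exact div_self (JP_ne_zero hq n)

lemma Jgb_self {q : ℂ} (hq : ‖q‖ < 1) (n : ℕ) : Jgb q n n = 1 := by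
  simp only [Jgb, if_pos (le_refl n), Nat.sub_self, JP_zero, mul_one]
  exact div_self (JP_ne_zero hq n)

lemma Jgb_pascal {q : ℂ} (hq : ‖q‖ < 1) (n k : ℕ) (hk : k ≤ n) :
    Jgb q (n + 1) (k + 1) = Jgb q n (k + 1) + q ^ (n - k) * Jgb q n k := by
  rcases eq_or_lt_of_le hk with rfl | hlt
  · have h1 : ¬ (k + 1 ≤ k) := by omega
    simp only [Jgb, if_pos (le_refl (k+1)), if_neg h1, if_pos (le_refl k), Nat.sub_self,
      JP_zero, mul_one, Nat.sub_self]
    rw [div_self (JP_ne_zero hq (k+1)), div_self (JP_ne_zero hq k)]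
    simp
  · have h1 : k + 1 ≤ n := hlt
    have e1 : JP q (n + 1) = JP q n * (1 - q ^ (n + 1)) := JP_succ q n
    have e2 : JP q (k + 1) = JP q k * (1 - q ^ (k + 1)) := JP_succ q k
    have e3 : n - k = (n - (k + 1)) + 1 := by omega
    have e4 : JP q (n - k) = JP q (n - (k+1)) * (1 - q ^ ((n - (k+1)) + 1)) := by
      rw [e3, JP_succ]
    have e5 : (n + 1) - (k + 1) = n - k := by omega
    simp only [Jgb, if_pos (by omega : k + 1 ≤ n + 1), if_pos h1, if_pos hk, e5]
    rw [e1, e2, e4]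
    have hqk : q ^ (n - k) * q ^ (k + 1) = q ^ (n + 1) := by
      rw [← pow_add]; congr 1; omega
    have hqk2 : q ^ ((n - (k+1)) + 1) = q ^ (n - k) := by congr 1; omega
    rw [hqk2, ← hqk]
    have hPn := JP_ne_zero hq n
    have hPk := JP_ne_zero hq k
    have hPnk1 := JP_ne_zero hq (n - (k+1))
    have h1k := one_sub_pow_ne hq k
    have h1nk : (1:ℂ) - q ^ (n - k) ≠ 0 := by
      have : n - k = (n - k - 1) + 1 := by omega
      rw [this]; exact one_sub_pow_ne hq _
    have h1n : (1:ℂ) - q ^ (n - k) * q ^ (k + 1) ≠ 0 := by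
      rw [hqk]; exact one_sub_pow_ne hq n
    generalize q ^ (n - k) = a at *
    generalize q ^ (k + 1) = b at *
    field_simp
    ring

lemma Jgb_big {q : ℂ} {n k : ℕ} (h : n < k) : Jgb q n k = 0 := by
  simp [Jgb, Nat.not_le.mpr h, h]

lemma Jphi {q : ℂ} (hq : ‖q‖ < 1) (x : ℂ) (n : ℕ) :
    ∏ j ∈ range n, (1 + x * q ^ j) =
      ∑ k ∈ range (n + 1), q ^ (k * (k - 1) / 2) * Jgb q n k * x ^ k := by
  induction n with
  | zero => simp [Jgb_zero hq]
  | succ n ih =>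
    rw [Finset.prod_range_succ, ih, mul_add, mul_one, Finset.sum_mul]
    -- first sum: ∑_{k<n+1} t k, extend index
    have hsplit1 : (∑ k ∈ range (n + 1), q ^ (k * (k - 1) / 2) * Jgb q n k * x ^ k)
        = q ^ (0 * (0-1) / 2) * Jgb q n 0 * x ^ 0
          + ∑ k ∈ range (n + 1), q ^ ((k+1) * k / 2) * Jgb q n (k+1) * x ^ (k+1) := by
      rw [Finset.sum_range_succ' _ n]
      simp only [Nat.add_sub_cancel]
      rw [Finset.sum_range_succ (fun k => q ^ ((k+1) * k / 2) * Jgb q n (k+1) * x ^ (k+1)) n]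
      rw [Jgb_big (by omega : n < n + 1)]
      ring
    rw [hsplit1]
    rw [Finset.sum_range_succ' (fun k => q ^ (k * (k - 1) / 2) * Jgb q (n+1) k * x ^ k) (n+1)]
    simp only [Nat.add_sub_cancel]
    rw [Jgb_zero hq, Jgb_zero hq]
    rw [add_assoc, ← Finset.sum_add_distrib]
    have hterm : ∀ k ∈ range (n + 1),
        q ^ ((k+1) * k / 2) * Jgb q n (k+1) * x ^ (k+1)
          + q ^ (k * (k - 1) / 2) * Jgb q n k * x ^ k * (x * q ^ n)
        = q ^ ((k+1) * k / 2) * Jgb q (n+1) (k+1) * x ^ (k+1) := by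
      intro k hk
      have hkn : k ≤ n := by simpa [Nat.lt_succ_iff] using Finset.mem_range.mp hk
      rw [Jgb_pascal hq n k hkn]
      have hexp : q ^ (k * (k-1) / 2) * q ^ n = q ^ ((k+1) * k / 2) * q ^ (n - k) := by
        rw [← pow_add, ← pow_add]
        congr 1
        have h1 : 2 ∣ k * (k - 1) := (Nat.even_mul_pred_self k).two_dvd
        have h2 : 2 ∣ (k + 1) * k := by
          have := Nat.even_mul_succ_self k
          rw [mul_comm] at this
          exact this.two_dvd
        have h3 : (k + 1) * k = k * (k - 1) + 2 * k := by
          cases k with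
          | zero => simp
          | succ m => simp only [Nat.succ_sub_one]; ring
        omega
      have : q ^ (k * (k - 1) / 2) * Jgb q n k * x ^ k * (x * q ^ n)
          = (q ^ (k * (k-1) / 2) * q ^ n) * Jgb q n k * x ^ (k+1) := by ring
      rw [this, hexp]
      ring
    rw [Finset.sum_congr rfl hterm]
    ring

-- helper: HasProd from summable logs
lemma hasProd_of_log (g : ℕ → ℂ) (h0 : ∀ j, g j ≠ 0)
    (hs : Summable fun j => Complex.log (g j)) :
    HasProd g (Complex.exp (∑' j, Complex.log (g j))) := by
  have h := hs.hasSum.cexp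
  have h2 : (Complex.exp ∘ fun j => Complex.log (g j)) = g :=
    funext fun j => Complex.exp_log (h0 j)
  rwa [h2] at h

-- summability of logs of 1 - c * q^j
lemma summable_log_one_sub {q : ℂ} (hq : ‖q‖ < 1) (c : ℂ) :
    Summable fun j : ℕ => Complex.log (1 - c * q ^ j) := by
  have hq0 : (0:ℝ) ≤ ‖q‖ := norm_nonneg q
  -- choose J with ‖c‖ * ‖q‖^J ≤ 1/2
  have htend : Tendsto (fun j : ℕ => ‖c‖ * ‖q‖ ^ j) atTop (𝓝 (‖c‖ * 0)) :=
    (tendsto_pow_atTop_nhds_zero_of_lt_one hq0 hq).const_mul ‖c‖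
  rw [mul_zero] at htend
  obtain ⟨J, hJ⟩ := (htend.eventually (eventually_le_nhds (by norm_num : (0:ℝ) < 1/2))).exists_forall_of_atTop
  rw [← summable_nat_add_iff J]
  apply Summable.of_norm_bounded (g := fun j => 3/2 * (‖c‖ * ‖q‖ ^ J) * ‖q‖ ^ j)
  · apply Summable.mul_left
    exact summable_geometric_of_lt_one hq0 hq
  · intro j
    have hb : ‖-(c * q ^ (j + J))‖ ≤ 1/2 := by
      rw [norm_neg, norm_mul, norm_pow]
      calc ‖c‖ * ‖q‖ ^ (j + J) ≤ ‖c‖ * ‖q‖ ^ J := by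
            apply mul_le_mul_of_nonneg_left _ (norm_nonneg c)
            exact pow_le_pow_of_le_one hq0 hq.le (by omega)
        _ ≤ 1/2 := hJ J le_rfl
    have := Complex.norm_log_one_add_half_le_self hb
    have heq : (1 : ℂ) + -(c * q ^ (j + J)) = 1 - c * q ^ (j + J) := by ring
    rw [heq] at this
    refine le_trans this ?_
    rw [norm_neg, norm_mul, norm_pow, pow_add]
    calc (3:ℝ)/2 * (‖c‖ * (‖q‖ ^ j * ‖q‖ ^ J)) = 3/2 * (‖c‖ * ‖q‖ ^ J) * ‖q‖ ^ j := by ring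
      _ ≤ 3/2 * (‖c‖ * ‖q‖ ^ J) * ‖q‖ ^ j := le_rfl

-- partial products of JP-type are bounded
lemma norm_prod_one_sub_le {q : ℂ} (hq : ‖q‖ < 1) (n : ℕ) :
    ‖∏ i ∈ range n, (1 - q ^ (i + 1))‖ ≤ Real.exp (1 / (1 - ‖q‖)) := by
  have hq0 : (0:ℝ) ≤ ‖q‖ := norm_nonneg q
  calc ‖∏ i ∈ range n, (1 - q ^ (i + 1))‖ ≤ ∏ i ∈ range n, ‖(1 : ℂ) - q ^ (i + 1)‖ :=
        norm_prod_le _ _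
    _ ≤ ∏ i ∈ range n, Real.exp (‖q‖ ^ (i + 1)) := by
        apply Finset.prod_le_prod (fun i _ => norm_nonneg _)
        intro i _
        calc ‖(1:ℂ) - q ^ (i+1)‖ ≤ ‖(1:ℂ)‖ + ‖q ^ (i+1)‖ := norm_sub_le _ _
          _ = 1 + ‖q‖ ^ (i+1) := by rw [norm_one, norm_pow]
          _ ≤ Real.exp (‖q‖ ^ (i+1)) := by
              have := Real.add_one_le_exp (‖q‖ ^ (i+1))
              linarith
    _ = Real.exp (∑ i ∈ range n, ‖q‖ ^ (i + 1)) := by rw [Real.exp_sum]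
    _ ≤ Real.exp (1 / (1 - ‖q‖)) := by
        apply Real.exp_le_exp.mpr
        have hsum : ∑ i ∈ range n, ‖q‖ ^ (i + 1) ≤ ∑ i ∈ range n, ‖q‖ ^ i := by
          apply Finset.sum_le_sum
          intro i _
          exact pow_le_pow_of_le_one hq0 hq.le (by omega)
        refine le_trans hsum ?_
        calc ∑ i ∈ range n, ‖q‖ ^ i ≤ ∑' i : ℕ, ‖q‖ ^ i :=
              (summable_geometric_of_lt_one hq0 hq).sum_le_tsum _
                (fun i _ => pow_nonneg hq0 i)
          _ = (1 - ‖q‖)⁻¹ := tsum_geometric_of_lt_one hq0 hq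
          _ = 1 / (1 - ‖q‖) := (one_div _).symm

noncomputable def JA (q z : ℂ) (m : ℤ) : ℂ := (-1) ^ m * q ^ (m * (m - 1) / 2) * z ^ m

lemma half_step (m : ℤ) : (m + 1) * m / 2 = m * (m - 1) / 2 + m := by
  have h1 : 2 ∣ m * (m - 1) := (Int.even_mul_pred_self m).two_dvd
  have h2 : 2 ∣ (m + 1) * m := by
    have := Int.even_mul_succ_self m
    rw [mul_comm] at this
    exact this.two_dvd
  have h3 : (m + 1) * m = m * (m - 1) + 2 * m := by ring
  omega

lemma JA_ne_zero {q z : ℂ} (hq0 : q ≠ 0) (hz : z ≠ 0) (m : ℤ) : JA q z m ≠ 0 := by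
  unfold JA
  exact mul_ne_zero (mul_ne_zero (zpow_ne_zero m (by norm_num)) (zpow_ne_zero _ hq0))
    (zpow_ne_zero m hz)

lemma JA_step (q z : ℂ) (hq0 : q ≠ 0) (hz : z ≠ 0) (m : ℤ) :
    JA q z (m + 1) = JA q z m * (-(q ^ m * z)) := by
  unfold JA
  rw [zpow_add₀ (by norm_num : (-1:ℂ) ≠ 0), zpow_add₀ hz,
    show (m + 1) * ((m + 1) - 1) / 2 = (m + 1) * m / 2 by ring_nf, half_step m,
    zpow_add₀ hq0]
  simp [zpow_one]
  ring

lemma JA_norm_summable {q z : ℂ} (hq : ‖q‖ < 1) (hq0 : q ≠ 0) (hz : z ≠ 0) :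
    Summable fun m : ℤ => ‖JA q z m‖ := by
  have hqn : (0:ℝ) ≤ ‖q‖ := norm_nonneg q
  apply Summable.norm
  apply Summable.of_nat_of_neg
  · -- positive side by ratio test
    apply summable_of_ratio_test_tendsto_lt_one (l := 0) one_pos
      (Filter.Eventually.of_forall fun n => JA_ne_zero hq0 hz n)
    have heq : ∀ n : ℕ, ‖JA q z (↑(n+1))‖ / ‖JA q z ↑n‖ = ‖q‖ ^ n * ‖z‖ := by
      intro n
      have h := JA_step q z hq0 hz n
      rw [show ((n:ℤ) + 1) = ((n+1 : ℕ) : ℤ) by push_cast; ring] at h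
      rw [h, norm_mul, mul_comm, mul_div_assoc,
        div_self (norm_ne_zero_iff.mpr (JA_ne_zero hq0 hz n)), mul_one, norm_neg, norm_mul,
        norm_zpow, zpow_natCast]
    apply Tendsto.congr (fun n => (heq n).symm)
    have : Tendsto (fun n : ℕ => ‖q‖ ^ n * ‖z‖) atTop (𝓝 (0 * ‖z‖)) :=
      (tendsto_pow_atTop_nhds_zero_of_lt_one hqn hq).mul_const ‖z‖
    simpa using this
  · -- negative side by ratio test
    apply summable_of_ratio_test_tendsto_lt_one (l := 0) one_pos
      (Filter.Eventually.of_forall fun n => JA_ne_zero hq0 hz (-n))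
    have heq : ∀ n : ℕ, ‖JA q z (-(↑(n+1) : ℤ))‖ / ‖JA q z (-↑n)‖ = ‖q‖ ^ (n+1) * ‖z‖⁻¹ := by
      intro n
      have h := JA_step q z hq0 hz (-(↑(n+1) : ℤ))
      rw [show (-(↑(n+1) : ℤ) + 1) = -(n:ℤ) by push_cast; ring] at h
      have hw : (-(q ^ (-(↑(n+1):ℤ)) * z)) ≠ 0 :=
        neg_ne_zero.mpr (mul_ne_zero (zpow_ne_zero _ hq0) hz)
      have h2 : JA q z (-(↑(n+1) : ℤ)) = JA q z (-(n:ℤ)) * (-(q ^ (-(↑(n+1):ℤ)) * z))⁻¹ := by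
        field_simp [h]
        rw [h]; ring
      rw [h2, norm_mul, mul_comm, mul_div_assoc,
        div_self (norm_ne_zero_iff.mpr (JA_ne_zero hq0 hz (-(n:ℤ)))), mul_one, norm_inv,
        norm_neg, norm_mul, norm_zpow, mul_inv]
      rw [show (-(↑(n+1):ℤ)) = -((n+1 : ℕ) : ℤ) by push_cast; ring, zpow_neg, zpow_natCast,
        inv_inv]
    apply Tendsto.congr (fun n => (heq n).symm)
    have : Tendsto (fun n : ℕ => ‖q‖ ^ (n+1) * ‖z‖⁻¹) atTop (𝓝 (0 * ‖z‖⁻¹)) := by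
      apply Tendsto.mul_const
      rw [show (0:ℝ) = 0 * ‖q‖ by ring]
      exact (tendsto_pow_atTop_nhds_zero_of_lt_one hqn hq).mul_const ‖q‖ |>.congr
        (fun n => by rw [pow_succ])
    simpa using this

lemma natCast_half_mul (n : ℕ) : ((n * (n - 1) / 2 : ℕ) : ℤ) = (n : ℤ) * ((n : ℤ) - 1) / 2 := by
  rcases n with _ | m
  · simp
  · rw [Int.natCast_div]
    push_cast [Nat.succ_sub_one]
    ring_nf

lemma jfin_exp (N k : ℕ) :
    -((N * (N - 1) / 2 : ℕ) : ℤ) + ((k * (k - 1) / 2 : ℕ) : ℤ) + (-(N:ℤ)) * ((k:ℤ) - N)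
      = ((k:ℤ) - N) * (((k:ℤ) - N) - 1) / 2 := by
  rw [natCast_half_mul, natCast_half_mul]
  have h1 : 2 ∣ (N:ℤ) * ((N:ℤ) - 1) := (Int.even_mul_pred_self _).two_dvd
  have h2 : 2 ∣ (k:ℤ) * ((k:ℤ) - 1) := (Int.even_mul_pred_self _).two_dvd
  have h3 : 2 ∣ ((k:ℤ) - N) * (((k:ℤ) - N) - 1) := (Int.even_mul_pred_self _).two_dvd
  have h4 : (k:ℤ) * ((k:ℤ) - 1) - (N:ℤ) * ((N:ℤ) - 1) - 2 * ((N:ℤ) * ((k:ℤ) - N))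
      = ((k:ℤ) - N) * (((k:ℤ) - N) - 1) := by ring
  generalize (N:ℤ) * ((N:ℤ) - 1) = A at *
  generalize (k:ℤ) * ((k:ℤ) - 1) = B at *
  generalize ((k:ℤ) - N) * (((k:ℤ) - N) - 1) = C at *
  rw [show (-(N:ℤ)) * ((k:ℤ) - N) = -((N:ℤ) * ((k:ℤ) - N)) by ring]
  generalize (N:ℤ) * ((k:ℤ) - N) = D at *
  omega

lemma Jfin {q z : ℂ} (hq : ‖q‖ < 1) (hq0 : q ≠ 0) (hz : z ≠ 0) (N : ℕ) :
    ∏ j ∈ range N, ((1 - z * q ^ j) * (1 - q ^ (j + 1) * z⁻¹)) =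
      ∑ k ∈ range (2 * N + 1), JA q z ((k:ℤ) - N) * Jgb q (2 * N) k := by
  have hqN : (q : ℂ) ^ N ≠ 0 := pow_ne_zero N hq0
  set w : ℂ := -(z * (q ^ N)⁻¹) with hw_def
  have hw : w ≠ 0 := neg_ne_zero.mpr (mul_ne_zero hz (inv_ne_zero hqN))
  have h1 := Jphi hq w (2 * N)
  -- transform LHS of h1
  have hB : ∏ j ∈ range N, (1 + w * q ^ (N + j)) = ∏ j ∈ range N, (1 - z * q ^ j) := by
    refine Finset.prod_congr rfl fun j _ => ?_
    rw [hw_def, pow_add]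
    field_simp
    ring
  have hA : ∏ j ∈ range N, (1 + w * q ^ j)
      = w ^ N * q ^ (N * (N - 1) / 2) * ∏ j ∈ range N, (1 - q ^ (j + 1) * z⁻¹) := by
    have step1 : ∀ j ∈ range N, 1 + w * q ^ j = (w * q ^ j) * (1 - q ^ (N - j) * z⁻¹) := by
      intro j hj
      have hjN : j < N := Finset.mem_range.mp hj
      have hpow : q ^ j * q ^ (N - j) = q ^ N := by rw [← pow_add]; congr 1; omega
      rw [hw_def]
      field_simp
      linear_combination (-1 : ℂ) * hpow
    rw [Finset.prod_congr rfl step1, Finset.prod_mul_distrib]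
    congr 1
    · rw [Finset.prod_mul_distrib, Finset.prod_const, Finset.card_range,
        Finset.prod_pow_eq_pow_sum, Finset.sum_range_id]
    · rw [← Finset.prod_range_reflect]
      refine Finset.prod_congr rfl fun j hj => ?_
      have hjN : j < N := Finset.mem_range.mp hj
      rw [show N - (N - 1 - j) = j + 1 from by omega]
  have hLHS : ∏ j ∈ range (2 * N), (1 + w * q ^ j)
      = w ^ N * q ^ (N * (N - 1) / 2) *
        ∏ j ∈ range N, ((1 - z * q ^ j) * (1 - q ^ (j + 1) * z⁻¹)) := by
    rw [two_mul, Finset.prod_range_add, hA, hB, Finset.prod_mul_distrib]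
    ring
  rw [hLHS] at h1
  have hC : w ^ N * q ^ (N * (N - 1) / 2) ≠ 0 :=
    mul_ne_zero (pow_ne_zero N hw) (pow_ne_zero _ hq0)
  -- key scalar identity
  have key2 : ∀ k : ℕ, w ^ ((k:ℤ) - N) * q ^ (((k * (k-1) / 2 : ℕ) : ℤ) - ((N * (N-1) / 2 : ℕ) : ℤ))
      = JA q z ((k:ℤ) - N) := by
    intro k
    set m : ℤ := (k:ℤ) - N with hm
    have hw1 : w = (-1) * z * q ^ (-(N:ℤ)) := by
      rw [hw_def, zpow_neg, zpow_natCast]; ring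
    rw [hw1, mul_zpow, mul_zpow, ← zpow_mul]
    unfold JA
    have hexp : (-(N:ℤ)) * m + (((k * (k-1) / 2 : ℕ) : ℤ) - ((N * (N-1) / 2 : ℕ) : ℤ))
        = m * (m - 1) / 2 := by
      have := jfin_exp N k
      rw [hm]; omega
    rw [← hexp, zpow_add₀ hq0]
    ring
  have key : ∀ k : ℕ, w ^ k * q ^ (k * (k-1) / 2) =
      (w ^ N * q ^ (N * (N-1) / 2)) * JA q z ((k:ℤ) - N) := by
    intro k
    rw [← key2 k]
    rw [← zpow_natCast w k, ← zpow_natCast q (k * (k-1) / 2), ← zpow_natCast w N,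
      ← zpow_natCast q (N * (N-1) / 2)]
    rw [show ((k:ℤ)) = (N:ℤ) + ((k:ℤ) - N) by ring, zpow_add₀ hw]
    rw [show (((k * (k-1) / 2 : ℕ)):ℤ) = ((N * (N-1) / 2 : ℕ) : ℤ)
      + ((((k * (k-1) / 2 : ℕ)):ℤ) - ((N * (N-1) / 2 : ℕ) : ℤ)) by ring, zpow_add₀ hq0]
    ring
  -- conclude
  have h2 : ∏ j ∈ range N, ((1 - z * q ^ j) * (1 - q ^ (j + 1) * z⁻¹))
      = (w ^ N * q ^ (N * (N - 1) / 2))⁻¹ * ∑ k ∈ range (2 * N + 1),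
          q ^ (k * (k - 1) / 2) * Jgb q (2 * N) k * w ^ k := by
    rw [← h1]
    field_simp
  rw [h2, Finset.mul_sum]
  refine Finset.sum_congr rfl fun k _ => ?_
  have hk := key k
  have : JA q z ((k:ℤ) - N) = w ^ k * q ^ (k * (k-1) / 2) / (w ^ N * q ^ (N * (N-1) / 2)) := by
    rw [hk]; field_simp
  rw [this]
  field_simp

-- Case A : q = 0, LHS value
lemma caseA_lhs (z : ℂ) :
    ∑' k : ℤ, (-1 : ℂ) ^ k * (0:ℂ) ^ (k * (k - 1) / 2) * z ^ k = 1 - z := by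
  rw [tsum_eq_sum (s := ({0, 1} : Finset ℤ)) ?_]
  · norm_num
    ring
  · intro k hk
    have hk0 : k ≠ 0 := by intro h; subst h; simp at hk
    have hk1 : k ≠ 1 := by intro h; subst h; simp at hk
    have hpos : 0 < k * (k - 1) := by
      rcases lt_or_gt_of_ne hk0 with h | h
      · exact mul_pos_of_neg_of_neg h (by omega)
      · apply mul_pos (by omega) (by omega)
    have heven : Even (k * (k - 1)) := Int.even_mul_pred_self k
    have hne : k * (k - 1) / 2 ≠ 0 := by
      obtain ⟨c, hc⟩ := heven
      omega
    rw [zero_zpow _ hne]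
    ring

-- tprod with a zero factor vanishes
lemma tprod_eq_zero {f : ℕ → ℂ} (j₀ : ℕ) (h : f j₀ = 0) : ∏' j, f j = 0 := by
  have hp : HasProd f 0 := by
    unfold HasProd
    apply Tendsto.congr' _ tendsto_const_nhds
    rw [Filter.EventuallyEq, SummationFilter.unconditional_filter, eventually_atTop]
    refine ⟨{j₀}, fun s hs => ?_⟩
    exact (Finset.prod_eq_zero (hs (Finset.mem_singleton_self j₀)) h).symm
  exact hp.tprod_eq

-- Case B : LHS vanishes when z = q ^ t
lemma caseB_lhs {q z : ℂ} (hq0 : q ≠ 0) (t : ℤ) (hzq : z = q ^ t) :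
    ∑' k : ℤ, (-1 : ℂ) ^ k * q ^ (k * (k - 1) / 2) * z ^ k = 0 := by
  have hA : ∀ k : ℤ, (-1 : ℂ) ^ k * q ^ (k * (k - 1) / 2) * z ^ k = JA q z k := fun k => rfl
  have hneg : ∀ k : ℤ, JA q z ((1 - 2*t) - k) = - JA q z k := by
    intro k
    unfold JA
    rw [hzq, ← zpow_mul, ← zpow_mul]
    have hsign : (-1 : ℂ) ^ ((1 - 2*t) - k) = -((-1:ℂ) ^ k) := by
      rw [show (1 - 2*t) - k = 1 + 2 * (-t - k) + 2 * k + (-k) by ring]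
      rw [zpow_add₀ (by norm_num : (-1:ℂ) ≠ 0), zpow_add₀ (by norm_num : (-1:ℂ) ≠ 0),
        zpow_add₀ (by norm_num : (-1:ℂ) ≠ 0)]
      rw [zpow_mul, zpow_mul]
      norm_num
      rw [← inv_zpow]
      norm_num
    rw [hsign]
    have hexp : ((1 - 2*t) - k) * (((1 - 2*t) - k) - 1) / 2 + t * ((1 - 2*t) - k)
        = k * (k - 1) / 2 + t * k := by
      have h1 : Even (((1 - 2*t) - k) * (((1 - 2*t) - k) - 1)) := Int.even_mul_pred_self _
      have h2 : Even (k * (k - 1)) := Int.even_mul_pred_self _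
      have h4 : ((1 - 2*t) - k) * (((1 - 2*t) - k) - 1) + 2 * (t * ((1 - 2*t) - k))
          = k * (k - 1) + 2 * (t * k) := by ring
      generalize ((1 - 2*t) - k) * (((1 - 2*t) - k) - 1) = A at *
      generalize k * (k - 1) = B at *
      generalize t * ((1 - 2*t) - k) = C at *
      generalize t * k = D at *
      omega
    have e1 : q ^ ((1 - 2*t - k) * ((1 - 2*t - k) - 1) / 2) * q ^ (t * (1 - 2*t - k))
        = q ^ (k * (k - 1) / 2) * q ^ (t * k) := by
      rw [← zpow_add₀ hq0, ← zpow_add₀ hq0, hexp]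
    linear_combination (-(-1:ℂ) ^ k) * e1
  simp only [hA]
  have h1 : ∑' k : ℤ, JA q z k = ∑' k : ℤ, JA q z ((Equiv.subLeft (1 - 2*t)) k) :=
    ((Equiv.subLeft (1 - 2*t)).tsum_eq (JA q z)).symm
  have h2 : ∑' k : ℤ, JA q z ((Equiv.subLeft (1 - 2*t)) k) = ∑' k : ℤ, - JA q z k := by
    apply tsum_congr
    intro k
    simpa [Equiv.subLeft] using hneg k
  rw [tsum_neg] at h2
  have := h1.trans h2
  linear_combination this / 2

noncomputable def Jc (q : ℂ) (N : ℕ) (m : ℤ) : ℂ :=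
  if m.natAbs ≤ N then Jgb q (2 * N) ((N : ℤ) + m).toNat else 0


theorem jacobi_triple_product (q z : ℂ) (hq : ‖q‖ < 1) (hz : z ≠ 0) :
    ∑' k : ℤ, (-1 : ℂ) ^ k * q ^ (k * (k - 1) / 2) * z ^ k =
      qPochhammerInf q q * theta z q := by
  rcases eq_or_ne q 0 with rfl | hq0
  · -- Case A : q = 0
    rw [caseA_lhs z]
    have h1 : qPochhammerInf 0 0 = 1 := by
      unfold qPochhammerInf
      simp
    have h2 : theta z 0 = 1 - z := by
      unfold theta
      rw [tprod_eq_mulSingle 0 ?_]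
      · norm_num
      · intro j hj
        simp [zero_pow hj]
    rw [h1, h2, one_mul]
  by_cases hzero : ∃ j : ℕ, (1 - z * q ^ j) * (1 - q ^ (j + 1) * z⁻¹) = 0
  · -- Case B : a theta factor vanishes
    obtain ⟨j, hj⟩ := hzero
    have hRHS : theta z q = 0 := tprod_eq_zero j hj
    rw [hRHS, mul_zero]
    rcases mul_eq_zero.mp hj with h | h
    · have hzq : z = q ^ (-(j:ℤ)) := by
        have h1 : z * q ^ j = 1 := by linear_combination -h
        rw [zpow_neg, zpow_natCast]
        field_simp at h1 ⊢
        linear_combination h1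
      exact caseB_lhs hq0 _ hzq
    · have hzq : z = q ^ ((j:ℤ) + 1) := by
        have h1 : q ^ (j + 1) * z⁻¹ = 1 := by linear_combination -h
        have h2 : q ^ (j + 1) = z := by
          field_simp at h1
          rw [← h1]
        rw [← h2, ← zpow_natCast]
        push_cast
        ring_nf
      exact caseB_lhs hq0 _ hzq
  -- Case C : main case
  push_neg at hzero
  have hu0 : ∀ j : ℕ, (1 : ℂ) - z * q ^ j ≠ 0 := fun j =>
    fun h => hzero j (by rw [h, zero_mul])
  have hv0 : ∀ j : ℕ, (1 : ℂ) - q ^ (j + 1) * z⁻¹ ≠ 0 := fun j =>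
    fun h => hzero j (by rw [h, mul_zero])
  -- HasProd for the three products
  have hvshape : (fun j : ℕ => (1:ℂ) - q ^ (j+1) * z⁻¹) = fun j => 1 - (q * z⁻¹) * q ^ j := by
    funext j; rw [pow_succ']; ring
  have heshape : (fun j : ℕ => (1:ℂ) - q * q ^ j) = fun j => 1 - q ^ (j + 1) := by
    funext j; rw [pow_succ']
  have he0 : ∀ j : ℕ, (1 : ℂ) - q * q ^ j ≠ 0 := by
    intro j; rw [show (1:ℂ) - q * q ^ j = 1 - q ^ (j+1) by rw [pow_succ']]
    exact one_sub_pow_ne hq j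
  have hU : HasProd (fun j : ℕ => 1 - z * q ^ j)
      (Complex.exp (∑' j : ℕ, Complex.log (1 - z * q ^ j))) :=
    hasProd_of_log _ hu0 (summable_log_one_sub hq z)
  have hv0' : ∀ j : ℕ, (1 : ℂ) - q * z⁻¹ * q ^ j ≠ 0 := fun j => by
    have := hv0 j
    rwa [show (1:ℂ) - q ^ (j+1) * z⁻¹ = 1 - q * z⁻¹ * q ^ j by rw [pow_succ']; ring] at this
  have hV : HasProd (fun j : ℕ => 1 - q ^ (j + 1) * z⁻¹)
      (Complex.exp (∑' j : ℕ, Complex.log (1 - q * z⁻¹ * q ^ j))) := by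
    rw [hvshape]
    exact hasProd_of_log _ hv0' (summable_log_one_sub hq (q * z⁻¹))
  have hE : HasProd (fun j : ℕ => 1 - q * q ^ j)
      (Complex.exp (∑' j : ℕ, Complex.log (1 - q * q ^ j))) :=
    hasProd_of_log _ he0 (summable_log_one_sub hq q)
  set E : ℂ := Complex.exp (∑' j : ℕ, Complex.log (1 - q * q ^ j)) with hEdef
  have hE0 : E ≠ 0 := Complex.exp_ne_zero _
  have hEq : qPochhammerInf q q = E := hE.tprod_eq
  -- partial products of JP tend to E
  have hJPshape : ∀ n : ℕ, JP q n = ∏ j ∈ range n, (1 - q * q ^ j) := by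
    intro n
    unfold JP
    exact Finset.prod_congr rfl fun j _ => by rw [pow_succ']
  have hPtend : Tendsto (fun n => JP q n) atTop (𝓝 E) := by
    have := hE.tendsto_prod_nat
    apply Tendsto.congr _ this
    intro n
    exact (hJPshape n).symm
  -- lower bound for ‖JP q n‖
  have hJPpos : ∀ n, 0 < ‖JP q n‖ := fun n => norm_pos_iff.mpr (JP_ne_zero hq n)
  obtain ⟨D, hD, hDle⟩ : ∃ D > 0, ∀ n, D ≤ ‖JP q n‖ := by
    have hnorm : Tendsto (fun n => ‖JP q n‖) atTop (𝓝 ‖E‖) := hPtend.norm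
    have hEpos : 0 < ‖E‖ := norm_pos_iff.mpr hE0
    obtain ⟨N₀, hN₀⟩ := eventually_atTop.mp
      (hnorm.eventually (eventually_ge_nhds (half_lt_self hEpos)))
    set s : Finset ℝ := (range (N₀ + 1)).image fun n => ‖JP q n‖ with hs
    have hsne : s.Nonempty := Finset.Nonempty.image ⟨0, Finset.mem_range.mpr (by omega)⟩ _
    refine ⟨min (‖E‖ / 2) (s.min' hsne), lt_min (by linarith) ?_, ?_⟩
    · obtain ⟨n₁, _, hn₁⟩ := Finset.mem_image.mp (s.min'_mem hsne)
      rw [← hn₁]; exact hJPpos n₁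
    · intro n
      rcases le_or_gt n N₀ with h | h
      · refine le_trans (min_le_right _ _) (s.min'_le _ ?_)
        exact Finset.mem_image.mpr ⟨n, Finset.mem_range.mpr (by omega), rfl⟩
      · exact le_trans (min_le_left _ _) (hN₀ n (by omega))
  -- uniform bound for Jgb and Jc
  set M : ℝ := Real.exp (1 / (1 - ‖q‖)) / (D * D) with hM
  have hM0 : 0 ≤ M := le_of_lt (div_pos (Real.exp_pos _) (mul_pos hD hD))
  have hgb_bound : ∀ n k, ‖Jgb q n k‖ ≤ M := by
    intro n k
    unfold Jgb
    split_ifs with h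
    · rw [norm_div, norm_mul, hM]
      apply div_le_div₀ (le_of_lt (Real.exp_pos _)) ?_ (mul_pos hD hD) ?_
      · have := norm_prod_one_sub_le hq n
        unfold JP
        exact this
      · exact mul_le_mul (hDle k) (hDle (n - k)) hD.le (norm_nonneg _)
    · simpa using hM0
  have hc_bound : ∀ N m, ‖Jc q N m‖ ≤ M := by
    intro N m
    unfold Jc
    split_ifs with h
    · exact hgb_bound _ _
    · simpa using hM0
  -- pointwise limit of Jc
  have hc_tend : ∀ m : ℤ, Tendsto (fun N => Jc q N m) atTop (𝓝 E⁻¹) := by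
    intro m
    have hEinv : E / (E * E) = E⁻¹ := by field_simp
    have t1 : Tendsto (fun N : ℕ => JP q (2 * N)) atTop (𝓝 E) :=
      hPtend.comp (tendsto_atTop_atTop.mpr fun b => ⟨b, fun n hn => by omega⟩)
    have t2 : Tendsto (fun N : ℕ => JP q ((N : ℤ) + m).toNat) atTop (𝓝 E) :=
      hPtend.comp (tendsto_atTop_atTop.mpr fun b => ⟨b + m.natAbs, fun n hn => by omega⟩)
    have t3 : Tendsto (fun N : ℕ => JP q (2 * N - ((N : ℤ) + m).toNat)) atTop (𝓝 E) :=
      hPtend.comp (tendsto_atTop_atTop.mpr fun b => ⟨b + 2 * m.natAbs, fun n hn => by omega⟩)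
    have tall : Tendsto (fun N : ℕ =>
        JP q (2 * N) / (JP q ((N : ℤ) + m).toNat * JP q (2 * N - ((N : ℤ) + m).toNat)))
        atTop (𝓝 (E / (E * E))) := t1.div (t2.mul t3) (mul_ne_zero hE0 hE0)
    rw [hEinv] at tall
    apply Tendsto.congr' _ tall
    rw [Filter.EventuallyEq, eventually_atTop]
    refine ⟨m.natAbs, fun N hN => ?_⟩
    unfold Jc Jgb
    rw [if_pos hN, if_pos (by omega)]
  -- rewrite the finite product as a tsum
  have hS : ∀ N : ℕ, ∏ j ∈ range N, ((1 - z * q ^ j) * (1 - q ^ (j + 1) * z⁻¹))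
      = ∑' m : ℤ, JA q z m * Jc q N m := by
    intro N
    rw [Jfin hq hq0 hz N]
    rw [tsum_eq_sum (s := (range (2 * N + 1)).image fun k : ℕ => (k : ℤ) - (N : ℤ)) ?_]
    · rw [Finset.sum_image (by intro a _ b _ h; simp only at h; omega)]
      refine Finset.sum_congr rfl fun k hk => ?_
      have hk' : k < 2 * N + 1 := Finset.mem_range.mp hk
      congr 1
      unfold Jc
      rw [if_pos (by omega), show ((N : ℤ) + ((k:ℤ) - N)).toNat = k by omega]
    · intro m hm
      have hcon : ¬ m.natAbs ≤ N := by
        intro hcon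
        apply hm
        apply Finset.mem_image.mpr
        refine ⟨(m + (N : ℤ)).toNat, Finset.mem_range.mpr (by omega), by omega⟩
      unfold Jc
      rw [if_neg hcon, mul_zero]
  -- Tannery's theorem
  have htan : Tendsto (fun N : ℕ => ∑' m : ℤ, JA q z m * Jc q N m) atTop
      (𝓝 (∑' m : ℤ, JA q z m * E⁻¹)) := by
    apply tendsto_tsum_of_dominated_convergence
      ((JA_norm_summable hq hq0 hz).mul_right M)
      (fun m => (hc_tend m).const_mul _)
    refine Filter.Eventually.of_forall fun N => fun m => ?_
    rw [norm_mul]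
    exact mul_le_mul_of_nonneg_left (hc_bound N m) (norm_nonneg _)
  have hprod_tend : Tendsto (fun N : ℕ => ∏ j ∈ range N,
      ((1 - z * q ^ j) * (1 - q ^ (j + 1) * z⁻¹))) atTop (𝓝 (theta z q)) := by
    have h := (hU.mul hV).tendsto_prod_nat
    have hth : theta z q = Complex.exp (∑' j : ℕ, Complex.log (1 - z * q ^ j)) *
        Complex.exp (∑' j : ℕ, Complex.log (1 - q * z⁻¹ * q ^ j)) := (hU.mul hV).tprod_eq
    rw [hth]
    exact h
  have hlim : theta z q = ∑' m : ℤ, JA q z m * E⁻¹ :=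
    tendsto_nhds_unique (hprod_tend.congr fun N => hS N) htan
  rw [tsum_mul_right] at hlim
  have hJAeq : ∑' k : ℤ, (-1 : ℂ) ^ k * q ^ (k * (k - 1) / 2) * z ^ k
      = ∑' m : ℤ, JA q z m := rfl
  rw [hJAeq, hEq, hlim]
  field_simp
end

section
/- Modular transformation of the theta function: for Im τ > 0 and u ∈ ℂ, θ₁(u/τ | −1/τ) = −i √(−iτ) e^{πiu²/τ} θ₁(u|τ), where θ₁(u|τ) = −∑_{k∈ℤ} e^{πiτ(k+1/2)²} e^{2πi(k+1/2)(u+1/2)} and √ denotes the principal branch. -/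
open Complex

noncomputable def theta1 (u τ : ℂ) : ℂ :=
  -∑' k : ℤ, Complex.exp ((Real.pi : ℂ) * Complex.I * τ * (k + 1 / 2) ^ 2 +
      2 * (Real.pi : ℂ) * Complex.I * (k + 1 / 2) * (u + 1 / 2))

lemma theta1_eq_jacobiTheta₂ (u τ : ℂ) :
    theta1 u τ = -(Complex.exp ((Real.pi : ℂ) * Complex.I * τ / 4 +
        (Real.pi : ℂ) * Complex.I * u + (Real.pi : ℂ) * Complex.I / 2) *
      jacobiTheta₂ (u + τ / 2 + 1 / 2) τ) := by
  unfold theta1 jacobiTheta₂ jacobiTheta₂_term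
  rw [← tsum_mul_left]
  congr 1
  refine tsum_congr fun k => ?_
  rw [← Complex.exp_add]
  congr 1
  ring

lemma exp_pi_div_two_mul_I : Complex.exp ((Real.pi : ℂ) * Complex.I / 2) = Complex.I := by
  rw [show (Real.pi : ℂ) * Complex.I / 2 = (↑(Real.pi / 2) : ℂ) * Complex.I by push_cast; ring,
    Complex.exp_mul_I]
  simp

lemma exp_neg_pi_div_two_mul_I :
    Complex.exp (-((Real.pi : ℂ) * Complex.I / 2)) = -Complex.I := by
  rw [Complex.exp_neg, _root_.exp_pi_div_two_mul_I, Complex.inv_I]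

theorem theta1_modular (τ u : ℂ) (hτ : 0 < τ.im) :
    theta1 (u / τ) (-1 / τ) =
      -Complex.I * (-Complex.I * τ) ^ ((1 : ℂ) / 2) *
        Complex.exp ((Real.pi : ℂ) * Complex.I * u ^ 2 / τ) * theta1 u τ := by
  have h0 : τ ≠ 0 := by rintro rfl; simp at hτ
  have hpow : (-Complex.I * τ) ^ ((1 : ℂ) / 2) ≠ 0 := by
    rw [Ne, Complex.cpow_eq_zero_iff, not_and_or]
    exact Or.inl (mul_ne_zero (neg_ne_zero.mpr Complex.I_ne_zero) h0)
  set z : ℂ := u + (τ - 1) / 2 with hz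
  have hfe := jacobiTheta₂_functional_equation z τ
  have hfe' : jacobiTheta₂ (z / τ) (-1 / τ) =
      (-Complex.I * τ) ^ ((1 : ℂ) / 2) * Complex.exp ((Real.pi : ℂ) * Complex.I * z ^ 2 / τ) *
        jacobiTheta₂ z τ := by
    have e1 : Complex.exp ((Real.pi : ℂ) * Complex.I * z ^ 2 / τ) *
        Complex.exp (-(Real.pi : ℂ) * Complex.I * z ^ 2 / τ) = 1 := by
      rw [← Complex.exp_add, ← Complex.exp_zero]; congr 1; ring
    have hA : (-Complex.I * τ) ^ ((1 : ℂ) / 2) * (1 / (-Complex.I * τ) ^ ((1 : ℂ) / 2)) = 1 := by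
      rw [mul_one_div, div_self hpow]
    linear_combination (-((-Complex.I * τ) ^ ((1 : ℂ) / 2) *
        Complex.exp ((Real.pi : ℂ) * Complex.I * z ^ 2 / τ))) * hfe +
      (-(jacobiTheta₂ (z / τ) (-1 / τ) * Complex.exp ((Real.pi : ℂ) * Complex.I * z ^ 2 / τ) *
        Complex.exp (-(Real.pi : ℂ) * Complex.I * z ^ 2 / τ))) * hA +
      (-(jacobiTheta₂ (z / τ) (-1 / τ))) * e1
  have harg : u / τ + (-1 / τ) / 2 + 1 / 2 = z / τ := by
    field_simp [hz]; ring
  have hper : jacobiTheta₂ z τ = jacobiTheta₂ (u + τ / 2 + 1 / 2) τ := by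
    rw [show u + τ / 2 + 1 / 2 = z + 1 by rw [hz]; ring, jacobiTheta₂_add_left]
  rw [theta1_eq_jacobiTheta₂, theta1_eq_jacobiTheta₂, harg, hfe', hper]
  have key : Complex.exp ((Real.pi : ℂ) * Complex.I * (-1 / τ) / 4 +
        (Real.pi : ℂ) * Complex.I * (u / τ) + (Real.pi : ℂ) * Complex.I / 2) *
      Complex.exp ((Real.pi : ℂ) * Complex.I * z ^ 2 / τ) =
      -Complex.I * (Complex.exp ((Real.pi : ℂ) * Complex.I * u ^ 2 / τ) *
        Complex.exp ((Real.pi : ℂ) * Complex.I * τ / 4 + (Real.pi : ℂ) * Complex.I * u +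
          (Real.pi : ℂ) * Complex.I / 2)) := by
    rw [← Complex.exp_add, ← _root_.exp_neg_pi_div_two_mul_I, ← Complex.exp_add, ← Complex.exp_add]
    congr 1
    have hinv : τ * τ⁻¹ = 1 := mul_inv_cancel₀ h0
    rw [hz]
    linear_combination ((Real.pi : ℂ) * Complex.I * u + (Real.pi : ℂ) * Complex.I * τ / 4 -
      (Real.pi : ℂ) * Complex.I / 2) * hinv
  linear_combination (-(((-Complex.I * τ) ^ ((1 : ℂ) / 2)) *
    jacobiTheta₂ (u + τ / 2 + 1 / 2) τ)) * key
end
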